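/- Let K be an algebraically closed field and n ≥ 1 a natural number. For t ∈ Kˣ let d_t : Kⁿ → Kⁿ be the linear automorphism d_t(a₁, …, aₙ) = (t·a₁, t²·a₂, …, tⁿ·aₙ). If B is a linear subspace of Kⁿ of codimension one such that B ∩ K·eᵢ = {0} for every standard basis vector eᵢ (i = 1, …, n), then the intersection ⋂_{t ∈ Kˣ} d_t(B) is the zero subspace. -/

import Mathlib

/-- Let `K` be an algebraically closed field and `n ≥ 1`. For `t ∈ Kˣ` let
`d t : Kⁿ → Kⁿ` be the linear automorphism `(a₁, …, aₙ) ↦ (t·a₁, t²·a₂, …, tⁿ·aₙ)`.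
If `B` is a linear subspace of `Kⁿ` of codimension one such that `B ∩ K·eᵢ = 0`
for every standard basis vector `eᵢ`, then `⋂_{t ∈ Kˣ} d_t(B) = 0`. -/
theorem stmt_0 {K : Type*} [Field K] [IsAlgClosed K] (n : ℕ) (hn : 1 ≤ n)
    (d : Kˣ → ((Fin n → K) →ₗ[K] (Fin n → K)))
    (hd : ∀ (t : Kˣ) (a : Fin n → K) (i : Fin n), d t a i = (t : K) ^ (i.val + 1) * a i)
    (B : Submodule K (Fin n → K))
    (hB : Module.finrank K ((Fin n → K) ⧸ B) = 1)
    (hBe : ∀ i : Fin n, B ⊓ Submodule.span K {(Pi.single i 1 : Fin n → K)} = ⊥) :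
    (⨅ t : Kˣ, B.map (d t)) = ⊥ := by
  -- Get a linear functional with kernel B
  obtain ⟨e⟩ : Nonempty (((Fin n → K) ⧸ B) ≃ₗ[K] K) :=
    FiniteDimensional.nonempty_linearEquiv_of_finrank_eq
      (by simp [hB])
  set φ : (Fin n → K) →ₗ[K] K := e.toLinearMap ∘ₗ B.mkQ with hφ
  have hker : ∀ y : Fin n → K, φ y = 0 ↔ y ∈ B := by
    intro y
    simp [hφ, LinearMap.comp_apply, map_eq_zero_iff _ e.injective,
      Submodule.Quotient.mk_eq_zero]
  set c : Fin n → K := fun i => φ (Pi.single i 1) with hc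
  have hc0 : ∀ i, c i ≠ 0 := by
    intro i h
    have hmem : (Pi.single i 1 : Fin n → K) ∈ B := (hker _).mp h
    have hmem2 : (Pi.single i 1 : Fin n → K) ∈
        B ⊓ Submodule.span K {(Pi.single i 1 : Fin n → K)} :=
      ⟨hmem, Submodule.mem_span_singleton_self _⟩
    rw [hBe i] at hmem2
    have : (Pi.single i 1 : Fin n → K) i = 0 := by
      rw [Submodule.mem_bot] at hmem2; rw [hmem2]; rfl
    simp at this
  rw [eq_bot_iff]
  intro x hx
  simp only [Submodule.mem_iInf] at hx
  -- key : for every nonzero s, ∑ i, s^(i+1) * x i * c i = 0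
  have key : ∀ s : K, s ≠ 0 → ∑ i : Fin n, s ^ (i.val + 1) * x i * c i = 0 := by
    intro s hs
    obtain ⟨b, hb, hbx⟩ := hx (Units.mk0 s hs)⁻¹
    have hbi : ∀ i : Fin n, b i = s ^ (i.val + 1) * x i := by
      intro i
      have := congrFun hbx i
      rw [hd] at this
      have hu : ((Units.mk0 s hs)⁻¹ : Kˣ) = (s⁻¹ : K) := rfl
      rw [hu] at this
      field_simp at this
      rw [← this]
      rw [one_div, inv_pow, ← mul_assoc, mul_inv_cancel₀ (pow_ne_zero _ hs), one_mul]
    have hφb : φ b = 0 := (hker b).mpr hb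
    rw [LinearMap.pi_apply_eq_sum_univ φ b] at hφb
    rw [← hφb]
    apply Finset.sum_congr rfl
    intro i _
    rw [hbi i]
    have hsingle : (fun j => if i = j then (1:K) else 0) = Pi.single i 1 := by
      funext j; simp [Pi.single_apply, eq_comm]
    rw [hsingle]
    simp only [smul_eq_mul, hc]
    try ring
  -- form the polynomial
  set P : Polynomial K :=
    ∑ i : Fin n, Polynomial.C (x i * c i) * Polynomial.X ^ (i.val + 1) with hP
  have hPeval : ∀ s : K, P.eval s = ∑ i : Fin n, s ^ (i.val + 1) * x i * c i := by
    intro s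
    simp [hP, Polynomial.eval_finset_sum]
    apply Finset.sum_congr rfl
    intro i _
    ring
  have hP0 : P = 0 := by
    apply Polynomial.zero_of_eval_zero
    intro s
    rcases eq_or_ne s 0 with rfl | hs
    · rw [hPeval]; simp
    · rw [hPeval]; exact key s hs
  have hcoeff : ∀ j : Fin n, x j * c j = 0 := by
    intro j
    have := congrArg (fun p => Polynomial.coeff p (j.val + 1)) hP0
    simp only [hP, Polynomial.finset_sum_coeff, Polynomial.coeff_C_mul,
      Polynomial.coeff_X_pow, Polynomial.coeff_zero, mul_ite, mul_one, mul_zero] at this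
    rw [Finset.sum_eq_single j] at this
    · simpa using this
    · intro i _ hij
      rw [if_neg]
      omega
    · intro h; simp at h
  have hx0 : x = 0 := by
    funext j
    exact (mul_eq_zero.mp (hcoeff j)).resolve_right (hc0 j)
  simp [hx0]
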